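/- Let X be a path-connected space with basepoint x₀, and suppose X is an H-SLT space at x₀ and H is locally quasinormal. If X is homotopically Hausdorff relative to H, then X is homotopically path Hausdorff relative to H. -/

import Mathlib

open CategoryTheory Topology
open scoped Pointwise

noncomputable section
namespace Paper

variable {X : Type*} [TopologicalSpace X]

attribute [local instance] Path.Homotopic.setoid

/-- The homotopy class of a loop as an element of the fundamental group. -/
def loopClass {x : X} (γ : Path x x) : FundamentalGroup X x :=
  FundamentalGroup.fromPath (Path.Homotopic.Quotient.mk γ)

/-- Conjugation of the fundamental group along a path: `h ↦ [ᾱ ∗ h ∗ α]`. -/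
def pathConj {x₀ x : X} (α : Path x₀ x) :
    FundamentalGroup X x₀ ≃* FundamentalGroup X x :=
  FundamentalGroup.fundamentalGroupMulEquivOfPath α

/-- The path-conjugate subgroup `H_α = [ᾱ H α]`. -/
def conjSubgroup {x₀ x : X} (H : Subgroup (FundamentalGroup X x₀)) (α : Path x₀ x) :
    Subgroup (FundamentalGroup X x) :=
  H.map (pathConj α).toMonoidHom

/-- `π(α,V)`: the subgroup of `π₁(X,x₀)` generated by classes `[α∗β∗ᾱ]`
with `β` a loop at `α(1)` lying in `V`. -/
def piSub {x₀ x : X} (α : Path x₀ x) (V : Set X) : Subgroup (FundamentalGroup X x₀) :=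
  Subgroup.closure
    {g | ∃ β : Path x x, (∀ t, β t ∈ V) ∧ g = loopClass ((α.trans β).trans α.symm)}

/-- `i₍#₎π₁(V,x)`: the image in `π₁(X,x)` of the fundamental group of `V`. -/
def loopSubgroup (x : X) (V : Set X) : Subgroup (FundamentalGroup X x) :=
  Subgroup.closure {g | ∃ β : Path x x, (∀ t, β t ∈ V) ∧ g = loopClass β}

/-- `H` is locally quasinormal. -/
def LocallyQuasinormal {x₀ : X} (H : Subgroup (FundamentalGroup X x₀)) : Prop :=
  ∀ (x : X) (α : Path x₀ x) (U : Set X), IsOpen U → x ∈ U →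
    ∃ V : Set X, V ⊆ U ∧ IsOpen V ∧ x ∈ V ∧
      (H : Set (FundamentalGroup X x₀)) * (piSub α V : Set (FundamentalGroup X x₀)) =
        (piSub α V : Set (FundamentalGroup X x₀)) * (H : Set (FundamentalGroup X x₀))

/-- `X` is an `H`-SLT space at the basepoint of `H`. -/
def SLTAt {b : X} (H : Subgroup (FundamentalGroup X b)) : Prop :=
  ∀ (x : X) (α : Path b x) (U : Set X), IsOpen U → b ∈ U →
    ∃ V : Set X, IsOpen V ∧ x ∈ V ∧
      ∀ β : Path x x, (∀ t, β t ∈ V) →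
        loopClass ((α.trans β).trans α.symm) ∈
          (H : Set (FundamentalGroup X b)) * (loopSubgroup b U : Set (FundamentalGroup X b))

/-- `X` is an `H`-SLT space. -/
def IsHSLT {x₀ : X} (H : Subgroup (FundamentalGroup X x₀)) : Prop :=
  ∀ (x : X) (δ : Path x₀ x), SLTAt (conjSubgroup H δ)

/-- `X` is a strong `H`-SLT space at the basepoint of `H`. -/
def StrongSLTAt {b : X} (H : Subgroup (FundamentalGroup X b)) : Prop :=
  ∀ (x : X) (U : Set X), IsOpen U → b ∈ U →
    ∃ V : Set X, IsOpen V ∧ x ∈ V ∧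
      ∀ (α : Path b x) (β : Path x x), (∀ t, β t ∈ V) →
        loopClass ((α.trans β).trans α.symm) ∈
          (H : Set (FundamentalGroup X b)) * (loopSubgroup b U : Set (FundamentalGroup X b))

/-- `X` is a strong `H`-SLT space. -/
def IsStrongHSLT {x₀ : X} (H : Subgroup (FundamentalGroup X x₀)) : Prop :=
  ∀ (x : X) (δ : Path x₀ x), StrongSLTAt (conjSubgroup H δ)

/-- `X` is homotopically Hausdorff relative to `H`. -/
def HomotopicallyHausdorffRel {b : X} (H : Subgroup (FundamentalGroup X b)) : Prop :=
  ∀ (x : X) (α : Path b x) (g : FundamentalGroup X b), g ∉ H →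
    ∃ U : Set X, IsOpen U ∧ x ∈ U ∧
      ∀ β : Path x x, (∀ t, β t ∈ U) →
        ∀ h ∈ H, loopClass ((α.trans β).trans α.symm) ≠ h * g

/-- `X` is homotopically path Hausdorff relative to `H`. -/
def HomotopicallyPathHausdorffRel {b : X} (H : Subgroup (FundamentalGroup X b)) : Prop :=
  ∀ (x : X) (α β : Path b x), loopClass (α.trans β.symm) ∉ H →
    ∃ (n : ℕ), 0 < n ∧
    ∃ (t : Fin (n + 1) → unitInterval) (U : Fin n → Set X),
      StrictMono t ∧ t 0 = 0 ∧ t (Fin.last n) = 1 ∧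
      (∀ i : Fin n, IsOpen (U i) ∧ ∀ s ∈ Set.Icc (t i.castSucc) (t i.succ), α s ∈ U i) ∧
      ∀ γ : Path b x,
        (∀ i : Fin n, ∀ s ∈ Set.Icc (t i.castSucc) (t i.succ), γ s ∈ U i) →
        (∀ j : Fin (n + 1), γ (t j) = α (t j)) →
        loopClass (γ.trans β.symm) ∉ H

/-- The collection of paths starting at `b`, with free endpoint. -/
def PathsFrom (b : X) := Σ x : X, Path b x

/-- The relation identifying paths in the standard construction `X̃_H`. -/
def stdRel {b : X} (H : Subgroup (FundamentalGroup X b)) :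
    PathsFrom b → PathsFrom b → Prop :=
  fun p q => ∃ h : q.1 = p.1, loopClass (p.2.trans (h ▸ q.2).symm) ∈ H

/-- The standard construction `X̃_H`. -/
def StdConstr {b : X} (H : Subgroup (FundamentalGroup X b)) := Quot (stdRel H)

/-- The class `[α]_H` of a path in the standard construction. -/
def stdClass {b : X} (H : Subgroup (FundamentalGroup X b)) (p : PathsFrom b) :
    StdConstr H :=
  Quot.mk _ p

/-- The basic whisker neighborhood `N_H([α]_H, U)`. -/
def whiskerNbhd {b : X} (H : Subgroup (FundamentalGroup X b)) (p : PathsFrom b)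
    (U : Set X) : Set (StdConstr H) :=
  {z | ∃ (y : X) (δ : Path p.1 y), (∀ t, δ t ∈ U) ∧ z = stdClass H ⟨y, p.2.trans δ⟩}

/-- The whisker topology on the standard construction. -/
def whiskerTopology {b : X} (H : Subgroup (FundamentalGroup X b)) :
    TopologicalSpace (StdConstr H) :=
  TopologicalSpace.generateFrom
    {s | ∃ (p : PathsFrom b) (U : Set X), IsOpen U ∧ p.1 ∈ U ∧ s = whiskerNbhd H p U}

/-- The Spanier subgroup `π(𝒰, y)` of `π₁(X,y)` associated to a family `𝒰` of subsets. -/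
def spanier (y : X) (𝒰 : Set (Set X)) : Subgroup (FundamentalGroup X y) :=
  Subgroup.closure
    {g | ∃ (z : X) (γ : Path y z) (β : Path z z), (∃ U ∈ 𝒰, ∀ t, β t ∈ U) ∧
          g = loopClass ((γ.trans β).trans γ.symm)}

/-- An open cover of `X`. -/
def IsOpenCover (𝒰 : Set (Set X)) : Prop :=
  (∀ U ∈ 𝒰, IsOpen U) ∧ ⋃₀ 𝒰 = Set.univ

/-- The basic lasso neighborhood `N_H([α]_H, 𝒰, U)`. -/
def lassoNbhd {b : X} (H : Subgroup (FundamentalGroup X b)) (p : PathsFrom b)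
    (𝒰 : Set (Set X)) (U : Set X) : Set (StdConstr H) :=
  {z | ∃ (l : Path p.1 p.1) (y : X) (δ : Path p.1 y),
        loopClass l ∈ spanier p.1 𝒰 ∧ (∀ t, δ t ∈ U) ∧
        z = stdClass H ⟨y, (p.2.trans l).trans δ⟩}

/-- The lasso topology on the standard construction. -/
def lassoTopology {b : X} (H : Subgroup (FundamentalGroup X b)) :
    TopologicalSpace (StdConstr H) :=
  TopologicalSpace.generateFrom
    {s | ∃ (p : PathsFrom b) (𝒰 : Set (Set X)) (U : Set X),
          IsOpenCover 𝒰 ∧ U ∈ 𝒰 ∧ IsOpen U ∧ p.1 ∈ U ∧ s = lassoNbhd H p 𝒰 U}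

/-- The endpoint projection `p_H : X̃_H → X`. -/
def endPt {b : X} (H : Subgroup (FundamentalGroup X b)) : StdConstr H → X :=
  Quot.lift (fun p => p.1) (fun _ _ h => h.1.symm)

/-- The whisker topology on the fundamental group `π₁^{wh}(X,x)`. -/
def whiskerTopOnPi (x : X) : TopologicalSpace (FundamentalGroup X x) :=
  TopologicalSpace.generateFrom
    {s | ∃ (g : FundamentalGroup X x) (U : Set X), IsOpen U ∧ x ∈ U ∧
          s = {g' | ∃ β : Path x x, (∀ t, β t ∈ U) ∧ g' = g * loopClass β}}

/-- The quasitopological fundamental group topology `π₁^{qtop}(X,x)`: the quotient of the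
compact-open topology on the loop space. -/
def qTop (x : X) : TopologicalSpace (FundamentalGroup X x) :=
  TopologicalSpace.coinduced loopClass inferInstance

/-- A map `p : E → X` (with `E` carrying the topology `tE`) has the unique path
lifting property. -/
def UniquePathLifting {E : Type*} (tE : TopologicalSpace E) (p : E → X) : Prop :=
  letI := tE
  ∀ f g : C(unitInterval, E), (∀ t, p (f t) = p (g t)) → f 0 = g 0 → f = g

/-- The small loop subgroup `π₁ˢ(X,x)`. -/
def smallLoopSubgroup (x : X) : Subgroup (FundamentalGroup X x) :=
  ⨅ (U : Set X) (_ : IsOpen U) (_ : x ∈ U), loopSubgroup x U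

/-- The Spanier group `π₁^{sp}(X,x)`: the intersection of all Spanier subgroups. -/
def spanierGroup (x : X) : Subgroup (FundamentalGroup X x) :=
  ⨅ (𝒰 : Set (Set X)) (_ : IsOpenCover 𝒰), spanier x 𝒰

/-- The path Spanier subgroup `π̃(𝒱, x₀)` of a path open cover `𝒱`. -/
def pathSpanier {b : X} (𝒱 : PathsFrom b → Set X) : Subgroup (FundamentalGroup X b) :=
  Subgroup.closure
    {g | ∃ (p : PathsFrom b) (β : Path p.1 p.1), (∀ t, β t ∈ 𝒱 p) ∧
          g = loopClass ((p.2.trans β).trans p.2.symm)}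

end Paper
end
namespace Paper
variable {X : Type*} [TopologicalSpace X]

attribute [local instance] Path.Homotopic.setoid

section Aux

open CategoryTheory

variable {x y z w : X}

/-! ### Hom classes of paths in the fundamental groupoid -/

/-- Abbreviation for the hom class of a path in the fundamental groupoid. -/
def ph {x y : X} (p : Path x y) : FundamentalGroupoid.mk x ⟶ FundamentalGroupoid.mk y := ⟦p⟧

/-- A fundamental group element viewed as a morphism. -/
def fgHom {x : X} (a : FundamentalGroup X x) : FundamentalGroupoid.mk x ⟶ FundamentalGroupoid.mk x :=
  a

lemma fgHom_inj {x : X} {a b : FundamentalGroup X x} (h : fgHom a = fgHom b) : a = b := h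

lemma loopClass_hom {x : X} (p : Path x x) : fgHom (loopClass p) = ph p := rfl

lemma loopClass_eq_of_homotopic {x : X} {p q : Path x x} (h : p.Homotopic q) :
    loopClass p = loopClass q := by
  apply fgHom_inj
  show ph p = ph q
  exact Quotient.sound h

lemma ph_trans (p : Path x y) (q : Path y z) : ph (p.trans q) = ph p ≫ ph q := by
  show _ = CategoryStruct.comp (obj := FundamentalGroupoid X) _ _
  rw [FundamentalGroupoid.comp_eq]
  exact Path.Homotopic.Quotient.mk_trans p q

lemma ph_refl (x : X) : ph (Path.refl x) = 𝟙 (FundamentalGroupoid.mk x) := by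
  rw [FundamentalGroupoid.id_eq_path_refl]; rfl

lemma ph_symm_comp (p : Path x y) : ph p.symm ≫ ph p = 𝟙 _ := by
  rw [← ph_trans, ← ph_refl]
  exact Quotient.sound ⟨(Path.Homotopy.reflSymmTrans p).symm⟩

lemma ph_comp_symm (p : Path x y) : ph p ≫ ph p.symm = 𝟙 _ := by
  rw [← ph_trans, ← ph_refl]
  exact Quotient.sound ⟨(Path.Homotopy.reflTransSymm p).symm⟩

lemma fg_mul_hom {x : X} (a b : FundamentalGroup X x) : fgHom (a * b) = fgHom b ≫ fgHom a := rfl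

lemma loopClass_trans {x : X} (p q : Path x x) :
    loopClass (p.trans q) = loopClass q * loopClass p := by
  apply fgHom_inj
  rw [fg_mul_hom, loopClass_hom, loopClass_hom, loopClass_hom, ph_trans]

lemma loopClass_refl {x : X} : loopClass (Path.refl x) = 1 := by
  apply fgHom_inj
  rw [loopClass_hom, ph_refl]; rfl

lemma loopClass_symm {x : X} (p : Path x x) :
    loopClass p.symm = (loopClass p)⁻¹ := by
  rw [eq_inv_iff_mul_eq_one]
  apply fgHom_inj
  rw [fg_mul_hom, loopClass_hom, loopClass_hom, ph_comp_symm]; rfl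

lemma ph_symm (p : Path x y) : ph p.symm = CategoryTheory.inv (ph p) :=
  IsIso.eq_inv_of_hom_inv_id (ph_comp_symm p)

lemma Path.Homotopic.symm₂' {p q : Path x y} (h : p.Homotopic q) : p.symm.Homotopic q.symm :=
  Nonempty.map Path.Homotopy.symm₂ h

lemma loopClass_triangle {x₀ y : X} (p q r : Path x₀ y) :
    loopClass (p.trans r.symm) = loopClass (q.trans r.symm) * loopClass (p.trans q.symm) := by
  apply fgHom_inj
  rw [fg_mul_hom]
  simp only [loopClass_hom, ph_trans, ph_symm, Category.assoc, IsIso.inv_hom_id_assoc]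

lemma loopClass_step {x₀ y z : X} (G A : Path x₀ y) (g a : Path y z) :
    loopClass ((G.trans g).trans (A.trans a).symm) =
      loopClass ((A.trans (g.trans a.symm)).trans A.symm) * loopClass (G.trans A.symm) := by
  apply fgHom_inj
  rw [fg_mul_hom]
  simp only [loopClass_hom, ph_trans, ph_symm, IsIso.inv_comp, Category.assoc,
    IsIso.inv_hom_id_assoc]

lemma loopClass_conj_shift {x₀ w y : X} (B : Path x₀ w) (e : Path w y) (l : Path y y) :
    loopClass (((B.trans e).trans l).trans (B.trans e).symm) =
      loopClass ((B.trans ((e.trans l).trans e.symm)).trans B.symm) := by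
  apply fgHom_inj
  simp only [loopClass_hom, ph_trans, ph_symm, IsIso.inv_comp, Category.assoc]

/-! ### Affine subpaths -/

instance : ContractibleSpace unitInterval :=
  (convex_Icc (0:ℝ) 1).contractibleSpace ⟨0, Set.mem_Icc.2 ⟨le_refl 0, zero_le_one⟩⟩

/-- The affine path in the unit interval from `a` to `b`. -/
def linePath (a b : unitInterval) : Path a b where
  toFun u := ⟨(1 - u.1) * a.1 + u.1 * b.1, by
    constructor
    · nlinarith [a.2.1, b.2.1, u.2.1, u.2.2]
    · nlinarith [a.2.2, b.2.2, u.2.1, u.2.2]⟩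
  continuous_toFun := by
    apply Continuous.subtype_mk
    fun_prop
  source' := by ext; simp
  target' := by ext; simp

lemma linePath_mem_le {a b u : unitInterval} (hab : a ≤ b) :
    a ≤ linePath a b u ∧ linePath a b u ≤ b := by
  constructor
  · show a.1 ≤ (1 - u.1) * a.1 + u.1 * b.1
    nlinarith [u.2.1, u.2.2, (Subtype.coe_le_coe.2 hab : a.1 ≤ b.1)]
  · show (1 - u.1) * a.1 + u.1 * b.1 ≤ b.1
    nlinarith [u.2.1, u.2.2, (Subtype.coe_le_coe.2 hab : a.1 ≤ b.1)]

lemma linePath_mem_between {a b u : unitInterval} :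
    min a b ≤ linePath a b u ∧ linePath a b u ≤ max a b := by
  rcases le_total a b with h | h
  · rw [min_eq_left h, max_eq_right h]; exact linePath_mem_le h
  · rw [min_eq_right h, max_eq_left h]
    show b.1 ≤ (1 - u.1) * a.1 + u.1 * b.1 ∧ (1 - u.1) * a.1 + u.1 * b.1 ≤ a.1
    constructor <;> nlinarith [u.2.1, u.2.2, (Subtype.coe_le_coe.2 h : b.1 ≤ a.1)]

/-- Restriction of a path to the (possibly reversed) interval from `a` to `b`. -/
def subPath (γ : Path x y) (a b : unitInterval) : Path (γ a) (γ b) :=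
  (linePath a b).map γ.continuous

lemma subPath_apply (γ : Path x y) (a b u : unitInterval) :
    subPath γ a b u = γ (linePath a b u) := rfl

lemma subPath_trans_homotopic (γ : Path x y) (a b c : unitInterval) :
    ((subPath γ a b).trans (subPath γ b c)).Homotopic (subPath γ a c) := by
  have h : ((linePath a b).trans (linePath b c)).Homotopic (linePath a c) :=
    SimplyConnectedSpace.paths_homotopic _ _
  have := Path.Homotopic.map h (⟨_, γ.continuous⟩ : C(unitInterval, X))
  rwa [Path.map_trans] at this

lemma cast_homotopic {x' y' : X} {p q : Path x y} (hx : x' = x) (hy : y' = y)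
    (h : p.Homotopic q) : (p.cast hx hy).Homotopic (q.cast hx hy) := by
  subst hx; subst hy; exact h

lemma cast_trans {x' y' z' : X} (p : Path x y) (q : Path y z)
    (hx : x' = x) (hy : y' = y) (hz : z' = z) :
    (p.cast hx hy).trans (q.cast hy hz) = (p.trans q).cast hx hz := by
  subst hx; subst hy; subst hz; rfl

lemma cast_symm {x' y' : X} (p : Path x y) (hx : x' = x) (hy : y' = y) :
    (p.cast hx hy).symm = p.symm.cast hy hx := by
  subst hx; subst hy; rfl

lemma trans_mem {W : Set X} {p : Path x y} {q : Path y z}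
    (hp : ∀ t, p t ∈ W) (hq : ∀ t, q t ∈ W) : ∀ t, (p.trans q) t ∈ W := by
  intro t
  rw [Path.trans_apply]
  split_ifs <;> [exact hp _; exact hq _]

lemma symm_mem {W : Set X} {p : Path x y} (hp : ∀ t, p t ∈ W) : ∀ t, p.symm t ∈ W := by
  intro t
  show p (unitInterval.symm t) ∈ W
  exact hp _

/-! ### Loop subgroups -/

lemma loopClass_conj_refl {x : X} (l : Path x x) :
    loopClass (((Path.refl x).trans l).trans (Path.refl x).symm) = loopClass l := by
  apply fgHom_inj
  simp only [loopClass_hom, ph_trans, ph_symm, ph_refl, Path.refl_symm,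
    Category.id_comp, IsIso.inv_id, Category.comp_id]

lemma piSub_refl (x : X) (V : Set X) : piSub (Path.refl x) V = loopSubgroup x V := by
  unfold piSub loopSubgroup
  congr 1
  ext g
  constructor
  · rintro ⟨b, hb, rfl⟩
    exact ⟨b, hb, loopClass_conj_refl b⟩
  · rintro ⟨b, hb, rfl⟩
    exact ⟨b, hb, (loopClass_conj_refl b).symm⟩

lemma loopSubgroup_mem {x : X} {W : Set X} (hx : x ∈ W) {g : FundamentalGroup X x}
    (hg : g ∈ loopSubgroup x W) :
    ∃ l : Path x x, (∀ t, l t ∈ W) ∧ g = loopClass l := by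
  unfold loopSubgroup at hg
  induction hg using Subgroup.closure_induction with
  | mem g hgmem => exact hgmem
  | one => exact ⟨Path.refl x, fun _ => hx, loopClass_refl.symm⟩
  | mul a b _ _ iha ihb =>
      obtain ⟨la, hla, rfl⟩ := iha
      obtain ⟨lb, hlb, rfl⟩ := ihb
      exact ⟨lb.trans la, trans_mem hlb hla, (loopClass_trans lb la).symm⟩
  | inv a _ iha =>
      obtain ⟨la, hla, rfl⟩ := iha
      exact ⟨la.symm, symm_mem hla, (loopClass_symm la).symm⟩

/-! ### Partitions via the Lebesgue number lemma -/

lemma exists_partition {x₀ x : X} (α : Path x₀ x) (V : unitInterval → Set X)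
    (hVopen : ∀ u, IsOpen (V u)) (hVmem : ∀ u, α u ∈ V u) :
    ∃ n : ℕ, 0 < n ∧ ∃ t : Fin (n + 1) → unitInterval,
      StrictMono t ∧ t 0 = 0 ∧ t (Fin.last n) = 1 ∧
      ∀ i : Fin n, ∃ u : unitInterval,
        ∀ s : unitInterval, min u (t i.castSucc) ≤ s → s ≤ max u (t i.succ) → α s ∈ V u := by
  have hr : ∀ u : unitInterval, ∃ r > 0, Metric.ball u r ⊆ α ⁻¹' (V u) := by
    intro u
    have hopen : IsOpen (α ⁻¹' (V u)) := (hVopen u).preimage α.continuous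
    exact Metric.isOpen_iff.1 hopen u (hVmem u)
  choose r hrpos hrball using hr
  obtain ⟨δ, hδpos, hδ⟩ := lebesgue_number_lemma_of_metric (s := (Set.univ : Set unitInterval))
    isCompact_univ (fun u => Metric.isOpen_ball) (fun s _ => Set.mem_iUnion.2
      ⟨s, Metric.mem_ball_self (hrpos s)⟩)
  obtain ⟨m, hm⟩ := exists_nat_one_div_lt hδpos
  set n := m + 1 with hn
  have hnpos : (0:ℝ) < n := by positivity
  have hmem : ∀ j : Fin (n + 1), ((j : ℝ) / n) ∈ unitInterval := by
    intro j
    constructor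
    · positivity
    · rw [div_le_one hnpos]
      exact_mod_cast Nat.le_of_lt_succ j.2
  refine ⟨n, Nat.succ_pos m, fun j => ⟨(j : ℝ) / n, hmem j⟩, ?_, ?_, ?_, ?_⟩
  · intro i j hij
    show ((i : ℝ) / n) < (j : ℝ) / n
    apply div_lt_div_of_pos_right ?_ hnpos
    exact_mod_cast hij
  · ext; show ((0:ℕ) : ℝ) / n = 0; simp
  · ext; show ((Fin.last n : Fin (n+1)) : ℝ) / n = 1
    rw [Fin.val_last]
    exact div_self (ne_of_gt hnpos)
  · intro i
    obtain ⟨u, hu⟩ := hδ ⟨(i.castSucc : ℝ) / n, hmem i.castSucc⟩ trivial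
    refine ⟨u, fun s hmin hmax => ?_⟩
    apply hrball u
    have h1 : dist (⟨(i.castSucc : ℝ) / n, hmem i.castSucc⟩ : unitInterval) u < r u := by
      have := hu (Metric.mem_ball_self hδpos)
      rwa [Metric.mem_ball] at this
    have h2 : dist (⟨(i.succ : ℝ) / n, hmem i.succ⟩ : unitInterval) u < r u := by
      apply hu
      rw [Metric.mem_ball, Subtype.dist_eq, Real.dist_eq]
      have : ((i.succ : ℝ) / n) - ((i.castSucc : ℝ) / n) = 1 / n := by
        rw [Fin.val_succ, Fin.coe_castSucc]
        push_cast
        field_simp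
        ring
      rw [show ((⟨(i.succ : ℝ) / n, hmem i.succ⟩ : unitInterval) : ℝ) = (i.succ : ℝ) / n from rfl]
      rw [show ((⟨(i.castSucc : ℝ) / n, hmem i.castSucc⟩ : unitInterval) : ℝ)
        = (i.castSucc : ℝ) / n from rfl]
      rw [this]
      rw [abs_of_pos (by positivity)]
      calc (1:ℝ)/n = 1/((m:ℝ)+1) := by rw [hn]; push_cast; ring
        _ < δ := hm
    rw [Subtype.dist_eq, Real.dist_eq] at h1 h2
    rw [Metric.mem_ball, Subtype.dist_eq, Real.dist_eq]
    have hminv : (min u (⟨(i.castSucc : ℝ) / n, hmem i.castSucc⟩ : unitInterval) : ℝ) ≤ (s:ℝ) :=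
      Subtype.coe_le_coe.2 hmin
    have hmaxv : (s:ℝ) ≤ (max u (⟨(i.succ : ℝ) / n, hmem i.succ⟩ : unitInterval) : ℝ) :=
      Subtype.coe_le_coe.2 hmax
    have hminc : min (u:ℝ) ((i.castSucc : ℝ) / n) ≤ (s:ℝ) := hminv
    have hmaxc : (s:ℝ) ≤ max (u:ℝ) ((i.succ : ℝ) / n) := hmaxv
    rw [abs_sub_lt_iff]
    constructor
    · rcases le_total ((s:ℝ)) (u:ℝ) with h | h
      · linarith [hrpos u]
      · rcases le_total ((i.succ : ℝ) / n) (u:ℝ) with h2' | h2'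
        · have : (s:ℝ) ≤ u := by
            rw [max_eq_left h2'] at hmaxc; exact hmaxc
          linarith [hrpos u]
        · rw [max_eq_right h2'] at hmaxc
          have := abs_sub_lt_iff.1 h2
          linarith [this.1]
    · rcases le_total (u:ℝ) ((s:ℝ)) with h | h
      · linarith [hrpos u]
      · rcases le_total (u:ℝ) ((i.castSucc : ℝ) / n) with h1' | h1'
        · rw [min_eq_left h1'] at hminc
          linarith [hrpos u]
        · rw [min_eq_right h1'] at hminc
          have := abs_sub_lt_iff.1 h1
          linarith [this.1]

end Aux

/-- Theorem 3.4: if `X` is `H`-SLT at `x₀`, `H` is locally quasinormal, and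
`X` is homotopically Hausdorff relative to `H`, then `X` is homotopically path Hausdorff
relative to `H`. -/
theorem hH_implies_hpH [PathConnectedSpace X] {x₀ : X}
    (H : Subgroup (FundamentalGroup X x₀)) (hSLT : SLTAt H)
    (hq : LocallyQuasinormal H) (hhH : HomotopicallyHausdorffRel H) :
    HomotopicallyPathHausdorffRel H := by
  intro x α β hg
  obtain ⟨U, hUopen, hx₀U, hU⟩ := hhH x₀ (Path.refl x₀) (loopClass (α.trans β.symm)) hg
  obtain ⟨W, hWsub, hWopen, hx₀W, hcomm⟩ := hq x₀ (Path.refl x₀) U hUopen hx₀U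
  rw [piSub_refl] at hcomm
  -- `K` is the product set `H * loopSubgroup x₀ W`; it is closed under multiplication
  have hKone : (1 : FundamentalGroup X x₀) ∈
      (H : Set (FundamentalGroup X x₀)) * (loopSubgroup x₀ W : Set (FundamentalGroup X x₀)) :=
    Set.mem_mul.2 ⟨1, H.one_mem, 1, (loopSubgroup x₀ W).one_mem, mul_one 1⟩
  have hKmul : ∀ a b : FundamentalGroup X x₀,
      a ∈ (H : Set (FundamentalGroup X x₀)) * (loopSubgroup x₀ W : Set _) →
      b ∈ (H : Set (FundamentalGroup X x₀)) * (loopSubgroup x₀ W : Set _) →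
      a * b ∈ (H : Set (FundamentalGroup X x₀)) * (loopSubgroup x₀ W : Set _) := by
    intro a b ha hb
    obtain ⟨h1, hh1, u1, hu1, rfl⟩ := Set.mem_mul.1 ha
    obtain ⟨h2, hh2, u2, hu2, rfl⟩ := Set.mem_mul.1 hb
    have h12 : u1 * h2 ∈ (loopSubgroup x₀ W : Set (FundamentalGroup X x₀)) * (H : Set _) :=
      Set.mul_mem_mul hu1 hh2
    rw [← hcomm] at h12
    obtain ⟨h3, hh3, u3, hu3, he⟩ := Set.mem_mul.1 h12
    refine Set.mem_mul.2 ⟨h1 * h3, H.mul_mem hh1 hh3, u3 * u2,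
      (loopSubgroup x₀ W).mul_mem hu3 hu2, ?_⟩
    calc h1 * h3 * (u3 * u2) = h1 * (h3 * u3) * u2 := by group
      _ = h1 * (u1 * h2) * u2 := by rw [he]
      _ = h1 * u1 * (h2 * u2) := by group
  -- SLT neighbourhoods along `α`
  have hA := fun u : unitInterval =>
    hSLT (α u) ((subPath α 0 u).cast α.source.symm rfl) W hWopen hx₀W
  choose V hVopen hVmem hVslt using hA
  obtain ⟨n, hn, t, hmono, ht0, htlast, hanchor⟩ := exists_partition α V hVopen hVmem
  choose u hu using hanchor
  have hts : ∀ i : Fin n, t i.castSucc ≤ t i.succ := fun i => (hmono (Fin.castSucc_lt_succ (i := i))).le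
  refine ⟨n, hn, t, fun i => V (u i), hmono, ht0, htlast, ?_, ?_⟩
  · intro i
    refine ⟨hVopen _, fun s hs => hu i s ?_ ?_⟩
    · exact le_trans (min_le_right _ _) hs.1
    · exact le_trans hs.2 (le_max_right _ _)
  · intro γ hγU hγt hmem
    -- telescoping: the `j`-th partial comparison loop lies in `K`
    have hd : ∀ j : Fin (n+1),
        loopClass (((subPath γ 0 (t j)).cast γ.source.symm (hγt j).symm).trans
          ((subPath α 0 (t j)).cast α.source.symm rfl).symm) ∈
        (H : Set (FundamentalGroup X x₀)) * (loopSubgroup x₀ W : Set _) := by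
      intro j
      induction j using Fin.induction with
      | zero =>
        have e0 : α (t 0) = x₀ := by rw [ht0]; exact α.source
        have hline0 : ∀ v : unitInterval, linePath 0 (t 0) v = 0 := by
          intro v
          ext
          show (1 - v.1) * (0:ℝ) + v.1 * (t 0).1 = 0
          rw [show ((t 0 : unitInterval) : ℝ) = 0 from congrArg Subtype.val ht0]
          ring
        have hG0 : (subPath γ 0 (t 0)).cast γ.source.symm (hγt 0).symm
            = (Path.refl x₀).cast rfl e0 := by
          ext v
          show γ (linePath 0 (t 0) v) = x₀
          rw [hline0, γ.source]
        have hA0 : (subPath α 0 (t 0)).cast α.source.symm rfl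
            = (Path.refl x₀).cast rfl e0 := by
          ext v
          show α (linePath 0 (t 0) v) = x₀
          rw [hline0, α.source]
        rw [hG0, hA0, cast_symm, cast_trans]
        show loopClass ((Path.refl x₀).trans (Path.refl x₀).symm) ∈ _
        have h1 : loopClass ((Path.refl x₀).trans (Path.refl x₀).symm)
            = (1 : FundamentalGroup X x₀) := by
          rw [loopClass_trans, loopClass_symm, loopClass_refl]
          group
        rw [h1]
        exact hKone
      | succ i ih =>
        have hGstep : ((subPath γ 0 (t i.succ)).cast γ.source.symm (hγt i.succ).symm).Homotopic
            (((subPath γ 0 (t i.castSucc)).cast γ.source.symm (hγt i.castSucc).symm).trans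
              ((subPath γ (t i.castSucc) (t i.succ)).cast (hγt i.castSucc).symm
                (hγt i.succ).symm)) := by
          rw [cast_trans]
          exact cast_homotopic _ _ (subPath_trans_homotopic γ 0 _ _).symm
        have hAstep : ((subPath α 0 (t i.succ)).cast α.source.symm rfl).Homotopic
            (((subPath α 0 (t i.castSucc)).cast α.source.symm rfl).trans
              ((subPath α (t i.castSucc) (t i.succ)).cast rfl rfl)) := by
          rw [cast_trans]
          exact cast_homotopic _ _ (subPath_trans_homotopic α 0 _ _).symm
        have heq1 := loopClass_eq_of_homotopic
          (Path.Homotopic.hcomp hGstep (Path.Homotopic.symm₂' hAstep))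
        rw [heq1, loopClass_step]
        refine hKmul _ _ ?_ ih
        -- the conjugated segment loop lies in `K` by the SLT property at the anchor `u i`
        have hAsplit : ((subPath α 0 (t i.castSucc)).cast α.source.symm rfl).Homotopic
            (((subPath α 0 (u i)).cast α.source.symm rfl).trans
              ((subPath α (u i) (t i.castSucc)).cast rfl rfl)) := by
          rw [cast_trans]
          exact cast_homotopic _ _ (subPath_trans_homotopic α 0 _ _).symm
        have heq2 := loopClass_eq_of_homotopic (Path.Homotopic.hcomp
          (Path.Homotopic.hcomp hAsplit (Path.Homotopic.refl
            (((subPath γ (t i.castSucc) (t i.succ)).cast (hγt i.castSucc).symm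
              (hγt i.succ).symm).trans
              ((subPath α (t i.castSucc) (t i.succ)).cast rfl rfl).symm)))
          (Path.Homotopic.symm₂' hAsplit))
        rw [heq2, loopClass_conj_shift]
        apply hVslt (u i)
        -- all points of the loop lie in `V (u i)`
        have he : ∀ v, ((subPath α (u i) (t i.castSucc)).cast rfl rfl) v ∈ V (u i) := by
          intro v
          show α (linePath (u i) (t i.castSucc) v) ∈ V (u i)
          exact hu i _ linePath_mem_between.1
            (le_trans linePath_mem_between.2 (max_le_max le_rfl (hts i)))
        have hγs : ∀ v, ((subPath γ (t i.castSucc) (t i.succ)).cast (hγt i.castSucc).symm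
            (hγt i.succ).symm) v ∈ V (u i) := by
          intro v
          show γ (linePath (t i.castSucc) (t i.succ) v) ∈ V (u i)
          exact hγU i _ ⟨(linePath_mem_le (hts i)).1, (linePath_mem_le (hts i)).2⟩
        have hαs : ∀ v, ((subPath α (t i.castSucc) (t i.succ)).cast rfl rfl) v ∈ V (u i) := by
          intro v
          show α (linePath (t i.castSucc) (t i.succ) v) ∈ V (u i)
          exact hu i _ (le_trans (min_le_right _ _) (linePath_mem_le (hts i)).1)
            (le_trans (linePath_mem_le (hts i)).2 (le_max_right _ _))
        exact trans_mem (trans_mem he (trans_mem hγs (symm_mem hαs))) (symm_mem he)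
    -- identify the last telescoping loop with `γ ∗ ᾱ`
    have hlastK := hd (Fin.last n)
    have hline1 : ∀ v : unitInterval, linePath 0 (t (Fin.last n)) v = v := by
      intro v
      ext
      show (1 - v.1) * (0:ℝ) + v.1 * (t (Fin.last n)).1 = v.1
      rw [show ((t (Fin.last n) : unitInterval) : ℝ) = 1 from congrArg Subtype.val htlast]
      ring
    have hGl : ((subPath γ 0 (t (Fin.last n))).cast γ.source.symm (hγt (Fin.last n)).symm).trans
        ((subPath α 0 (t (Fin.last n))).cast α.source.symm rfl).symm = γ.trans α.symm := by
      ext v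
      rw [Path.trans_apply, Path.trans_apply]
      split_ifs with h'
      · show γ (linePath 0 (t (Fin.last n)) _) = γ _
        rw [hline1]
      · show α (linePath 0 (t (Fin.last n)) (unitInterval.symm _)) = α (unitInterval.symm _)
        rw [hline1]
    rw [hGl] at hlastK
    -- derive the contradiction with homotopical Hausdorffness
    rw [hcomm] at hlastK
    obtain ⟨u1, hu1, h1, hh1, he1⟩ := Set.mem_mul.1 hlastK
    have htri : loopClass (γ.trans β.symm)
        = loopClass (α.trans β.symm) * loopClass (γ.trans α.symm) := loopClass_triangle γ α β
    have hh2 : loopClass (α.trans β.symm) * u1 ∈ H := by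
      have hmem' : loopClass (α.trans β.symm) * (u1 * h1) ∈ H := by
        rw [he1, ← htri]
        exact hmem
      have := H.mul_mem hmem' (H.inv_mem hh1)
      have heq : loopClass (α.trans β.symm) * (u1 * h1) * h1⁻¹
          = loopClass (α.trans β.symm) * u1 := by group
      rwa [heq] at this
    obtain ⟨l, hl, hlc⟩ := loopSubgroup_mem hx₀W hu1
    refine hU l.symm (fun v => hWsub (symm_mem hl v))
      (loopClass (α.trans β.symm) * u1)⁻¹ (H.inv_mem hh2) ?_
    rw [loopClass_conj_refl, loopClass_symm, ← hlc]
    group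
end Paper
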